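/- Let n be a natural number and let A be an invertible n×n complex matrix (IsUnit A). Then there exists a unitary matrix u ∈ Matrix.unitaryGroup (Fin n) ℂ such that A and u are joined by a continuous path lying entirely inside the set of invertible n×n complex matrices, i.e. JoinedIn {B : Matrix (Fin n) (Fin n) ℂ | IsUnit B} A u. -/

import Mathlib

open Matrix
open scoped ComplexOrder
open scoped MatrixOrder

private lemma smul_posSemidef {n : ℕ} (c : ℝ) (hc : 0 ≤ c)
    {M : Matrix (Fin n) (Fin n) ℂ} (hM : M.PosSemidef) :
    ((c : ℂ) • M).PosSemidef := by
  refine PosSemidef.of_dotProduct_mulVec_nonneg ?_ fun x => ?_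
  · unfold Matrix.IsHermitian
    rw [conjTranspose_smul, hM.1.eq]
    simp
  · rw [smul_mulVec, dotProduct_smul, smul_eq_mul]
    exact mul_nonneg (by exact_mod_cast hc) (hM.dotProduct_mulVec_nonneg x)

private lemma smul_posDef {n : ℕ} (c : ℝ) (hc : 0 < c)
    {M : Matrix (Fin n) (Fin n) ℂ} (hM : M.PosDef) :
    ((c : ℂ) • M).PosDef := by
  refine PosDef.of_dotProduct_mulVec_pos ?_ fun x hx => ?_
  · unfold Matrix.IsHermitian
    rw [conjTranspose_smul, hM.1.eq]
    simp
  · rw [smul_mulVec, dotProduct_smul, smul_eq_mul]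
    exact mul_pos (by exact_mod_cast hc) (hM.dotProduct_mulVec_pos hx)

private lemma posDef_of_posSemidef_isUnit {n : ℕ} {M : Matrix (Fin n) (Fin n) ℂ}
    (hM : M.PosSemidef) (hU : IsUnit M) : M.PosDef := by
  refine PosDef.of_dotProduct_mulVec_pos hM.1 fun x hx => ?_
  refine lt_of_le_of_ne (hM.dotProduct_mulVec_nonneg x) fun h => hx ?_
  have h0 : M *ᵥ x = 0 := (hM.dotProduct_mulVec_zero_iff x).mp h.symm
  have hinj : Function.Injective (M.mulVec) := mulVec_injective_iff_isUnit.mpr hU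
  simpa using hinj (h0.trans (M.mulVec_zero).symm)

/-- Every invertible complex matrix is joined to a unitary matrix by a continuous
path inside the set of invertible matrices. -/
theorem isUnit_joinedIn_unitary (n : ℕ) (A : Matrix (Fin n) (Fin n) ℂ)
    (hA : IsUnit A) :
    ∃ u ∈ Matrix.unitaryGroup (Fin n) ℂ,
      JoinedIn {B : Matrix (Fin n) (Fin n) ℂ | IsUnit B} A u := by
  have hAA : (Aᴴ * A).PosSemidef := posSemidef_conjTranspose_mul_self A
  set P : Matrix (Fin n) (Fin n) ℂ := CFC.sqrt (Aᴴ * A) with hPdef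
  have hPs : P.PosSemidef := (CFC.sqrt_nonneg (Aᴴ * A)).posSemidef
  have hPP : P * P = Aᴴ * A := CFC.sqrt_mul_sqrt_self _ hAA.nonneg
  have hdet : IsUnit A.det := (isUnit_iff_isUnit_det A).mp hA
  have hPunit : IsUnit P := by
    refine (isUnit_iff_isUnit_det P).mpr (isUnit_of_mul_isUnit_left (y := P.det) ?_)
    rw [← det_mul, hPP, det_mul, det_conjTranspose]
    exact hdet.star.mul hdet
  have hP : P.PosDef := posDef_of_posSemidef_isUnit hPs hPunit
  have hPinv : P⁻¹.PosDef := hP.inv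
  set u : Matrix (Fin n) (Fin n) ℂ := A * P⁻¹ with hu
  have hPherm : P⁻¹ᴴ = P⁻¹ := by
    rw [conjTranspose_nonsing_inv, hPs.1.eq]
  have hstar : star u * u = 1 := by
    have hPinvP : P⁻¹ * (P * P) * P⁻¹ = 1 := by
      rw [← mul_assoc, nonsing_inv_mul _ (isUnit_iff_isUnit_det _ |>.mp hPunit), one_mul,
        mul_nonsing_inv _ (isUnit_iff_isUnit_det _ |>.mp hPunit)]
    calc star u * u = P⁻¹ᴴ * (Aᴴ * A) * P⁻¹ := by
          simp only [hu, star_eq_conjTranspose, conjTranspose_mul]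
          rw [mul_assoc, mul_assoc, mul_assoc]
      _ = 1 := by rw [hPherm, ← hPP, hPinvP]
  have humem : u ∈ Matrix.unitaryGroup (Fin n) ℂ :=
    Matrix.mem_unitaryGroup_iff'.mpr hstar
  refine ⟨u, humem, ?_⟩
  -- the path t ↦ A * ((1-t) • 1 + t • P⁻¹)
  have hcont : Continuous fun t : unitInterval =>
      A * (((1 - (t : ℝ) : ℝ) : ℂ) • (1 : Matrix (Fin n) (Fin n) ℂ) + (((t : ℝ) : ℝ) : ℂ) • P⁻¹) := by
    apply continuous_const.matrix_mul
    apply Continuous.add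
    · exact ((Complex.continuous_ofReal.comp (continuous_const.sub
        continuous_subtype_val)).smul continuous_const)
    · exact ((Complex.continuous_ofReal.comp continuous_subtype_val).smul continuous_const)
  refine ⟨⟨⟨_, hcont⟩, ?_, ?_⟩, fun t => ?_⟩
  · simp
  · simp [hu]
  · show IsUnit (A * _)
    refine hA.mul ?_
    rcases eq_or_lt_of_le t.2.1 with h0 | h0
    · have : ((1 - (t : ℝ) : ℝ) : ℂ) • (1 : Matrix (Fin n) (Fin n) ℂ)
          + (((t : ℝ) : ℝ) : ℂ) • P⁻¹ = 1 := by
        rw [← h0]; simp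
      rw [this]; exact isUnit_one
    · have h1 : (0:ℝ) ≤ 1 - (t : ℝ) := by linarith [t.2.2]
      exact (Matrix.PosDef.posSemidef_add (smul_posSemidef _ h1 (Matrix.PosDef.one (n := Fin n) (R := ℂ)).posSemidef)
        (smul_posDef _ h0 hPinv)).isUnit
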